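/- Time-integral modular estimate: let M* be an N-function satisfying the Δ₂-condition with constant c and function h ∈ L¹(Ω), h ≥ 0, let T > 0 and d ∈ ℕ with 2^d ≥ T, and let g : Q → S³ be measurable with ∫_Q M*(x, g(x,t)) dx dt < ∞. Then there is a constant C(d) depending only on d and c such that ∫_Q M*(x, ∫₀ᵗ g(x,s) ds) dx dt ≤ c^d ∫_Q M*(x, g(x,t)) dx dt + C(d) ∫_Ω h(x) dx. -/

import Mathlib

open MeasureTheory Filter Set Topology

noncomputable section

/-- `ℝ³`, the ambient space of the material body `Ω`. -/
abbrev E3 := EuclideanSpace ℝ (Fin 3)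

/-- `3 × 3` real matrices. -/
abbrev Mat3 := Matrix (Fin 3) (Fin 3) ℝ

instance : MeasurableSpace Mat3 := inferInstanceAs (MeasurableSpace (Fin 3 → Fin 3 → ℝ))

/-- The Frobenius inner product `ξ : η` on matrices. -/
def mdot (ξ η : Mat3) : ℝ := ∑ i, ∑ j, ξ i j * η i j

/-- The Frobenius norm `|ξ|` of a matrix. -/
def mnorm (ξ : Mat3) : ℝ := Real.sqrt (mdot ξ ξ)

/-- `S³`: the set of symmetric `3 × 3` real matrices. -/
def Sym3 : Set Mat3 := {A | A.IsSymm}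

/-- `S³_d`: the set of symmetric traceless `3 × 3` real matrices. -/
def Sym3d : Set Mat3 := {A | A.IsSymm ∧ A.trace = 0}

/-- `M : Ω × S³ → [0,∞)` is an `N`-function: Carathéodory (measurable in `x`,
continuous in `ξ`), vanishing exactly at `0`, even, convex in `ξ`, with
`M(x,ξ)/|ξ| → 0` as `|ξ| → 0` and `M(x,ξ)/|ξ| → ∞` as `|ξ| → ∞`. -/
structure IsNFunction (Ω : Set E3) (M : E3 → Mat3 → ℝ) : Prop where
  nonneg : ∀ x ξ, 0 ≤ M x ξ
  meas : ∀ ξ, Measurable fun x => M x ξ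
  cont : ∀ x, ContinuousOn (M x) Sym3
  zero_iff : ∀ x ∈ Ω, ∀ ξ ∈ Sym3, (M x ξ = 0 ↔ ξ = 0)
  even : ∀ x ∈ Ω, ∀ ξ ∈ Sym3, M x (-ξ) = M x ξ
  convexOn : ∀ x, ConvexOn ℝ Sym3 (M x)
  tendsto_zero : ∀ x ∈ Ω,
    Tendsto (fun ξ => M x ξ / mnorm ξ) (nhdsWithin 0 (Sym3 \ {0})) (nhds 0)
  tendsto_top : ∀ x ∈ Ω,
    Tendsto (fun ξ => M x ξ / mnorm ξ) ((comap mnorm atTop) ⊓ Filter.principal Sym3) atTop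

/-- The complementary function `M*(x,η) = sup_{ξ ∈ S³} (ξ:η − M(x,ξ))`. -/
def complFn (M : E3 → Mat3 → ℝ) (x : E3) (η : Mat3) : ℝ :=
  ⨆ ξ : Sym3, (mdot ξ.1 η - M x ξ.1)

section AuxiliaryLemmas



attribute [local instance] Matrix.normedAddCommGroup Matrix.normedSpace

instance : BorelSpace Mat3 := inferInstanceAs (BorelSpace (Fin 3 → Fin 3 → ℝ))

instance : SecondCountableTopology Mat3 :=
  inferInstanceAs (SecondCountableTopology (Fin 3 → Fin 3 → ℝ))

instance : ContinuousENorm Mat3 := @SeminormedAddGroup.toContinuousENorm Mat3 _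

example : SecondCountableTopology Mat3 := inferInstance
example : CompleteSpace Mat3 := inferInstance
example : FiniteDimensional ℝ Mat3 := inferInstance

lemma sym3_zero : (0 : Mat3) ∈ Sym3 := by simp [Sym3, Matrix.IsSymm]
lemma sym3_smul (r : ℝ) {A : Mat3} (h : A ∈ Sym3) : r • A ∈ Sym3 := by
  simpa [Sym3, Matrix.IsSymm, Matrix.transpose_smul] using congrArg (r • ·) h

lemma isClosed_sym3 : IsClosed Sym3 := by
  have : Sym3 = ⋂ (j : Fin 3) (k : Fin 3), {A : Mat3 | A k j = A j k} := by
    ext A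
    simp only [Sym3, Matrix.IsSymm, mem_setOf_eq, mem_iInter]
    constructor
    · intro hA j k; exact congrFun (congrFun hA j) k
    · intro hA; ext j k; exact hA j k
  rw [this]
  refine isClosed_iInter fun j => isClosed_iInter fun k => ?_
  have h1 : Continuous fun A : Mat3 => A k j := (continuous_apply j).comp (continuous_apply k)
  have h2 : Continuous fun A : Mat3 => A j k := (continuous_apply k).comp (continuous_apply j)
  exact isClosed_eq h1 h2

lemma norm_le_mnorm (ξ : Mat3) : ‖ξ‖ ≤ mnorm ξ := by
  have hnn : 0 ≤ mnorm ξ := Real.sqrt_nonneg _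
  rw [Matrix.norm_le_iff hnn]
  intro j
  intro k
  have h1 : ξ j k ^ 2 ≤ mdot ξ ξ := by
    unfold mdot
    calc ξ j k ^ 2 ≤ ∑ l, ξ j l * ξ j l := by
          have : ∀ l ∈ Finset.univ, 0 ≤ ξ j l * ξ j l := fun l _ => mul_self_nonneg _
          have h := Finset.single_le_sum (f := fun l => ξ j l * ξ j l) this (Finset.mem_univ k)
          simpa [pow_two] using h
      _ ≤ ∑ i, ∑ l, ξ i l * ξ i l := by
          exact Finset.single_le_sum (f := fun i => ∑ l, ξ i l * ξ i l)
            (fun i _ => Finset.sum_nonneg fun l _ => mul_self_nonneg _) (Finset.mem_univ j)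
  calc ‖ξ j k‖ = Real.sqrt (ξ j k ^ 2) := by
        rw [Real.sqrt_sq_eq_abs]; rfl
    _ ≤ mnorm ξ := Real.sqrt_le_sqrt h1

/-- Carathéodory joint measurability on `E3 × Sym3`. -/
lemma caratheodory_meas {M : E3 → Mat3 → ℝ} (hmeas : ∀ ξ, Measurable fun x => M x ξ)
    (hcont : ∀ x, ContinuousOn (M x) Sym3) :
    Measurable (Function.uncurry fun (σ : Sym3) (x : E3) => M x σ.1) := by
  refine measurable_uncurry_of_continuous_of_measurable (fun x => ?_) (fun σ => hmeas σ.1)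
  exact continuousOn_iff_continuous_restrict.mp (hcont x)

lemma meas_comp_caratheodory {M : E3 → Mat3 → ℝ} (hmeas : ∀ ξ, Measurable fun x => M x ξ)
    (hcont : ∀ x, ContinuousOn (M x) Sym3) {γ : Type*} [MeasurableSpace γ]
    {F : γ → Mat3} (hF : Measurable F) (hFs : ∀ z, F z ∈ Sym3) {x : γ → E3}
    (hx : Measurable x) : Measurable fun z => M (x z) (F z) := by
  have h1 : Measurable fun z => ((⟨F z, hFs z⟩ : Sym3), x z) :=
    (hF.subtype_mk).prodMk hx
  exact (caratheodory_meas hmeas hcont).comp h1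

lemma scale_le {M : Mat3 → ℝ} (hconv : ConvexOn ℝ Sym3 M) (h0 : M 0 = 0)
    (hnn : ∀ ξ, 0 ≤ M ξ) {v : Mat3} (hv : v ∈ Sym3) {a : ℝ} (ha : 0 ≤ a) (ha1 : a ≤ 1) :
    M (a • v) ≤ M v := by
  have h := hconv.2 hv sym3_zero ha (by linarith : (0:ℝ) ≤ 1 - a) (by ring)
  rw [smul_zero, add_zero, h0, smul_zero, add_zero, smul_eq_mul] at h
  nlinarith [hnn v]

lemma delta2_iter {M : Mat3 → ℝ} (hnn : ∀ ξ, 0 ≤ M ξ) {c' hx : ℝ} (hc' : 0 ≤ c')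
    (hhx : 0 ≤ hx)
    (hΔ : ∀ ξ ∈ Sym3, M ((2:ℝ) • ξ) ≤ c' * M ξ + hx) {v : Mat3} (hv : v ∈ Sym3) (k : ℕ) :
    M (((2:ℝ) ^ k) • v) ≤ c' ^ k * M v + (∑ i ∈ Finset.range k, c' ^ i) * hx := by
  induction k with
  | zero => simp
  | succ n ih =>
    have h2 : ((2:ℝ) ^ (n+1)) • v = (2:ℝ) • (((2:ℝ)^n) • v) := by
      rw [smul_smul]; ring_nf
    rw [h2]
    have hmem : ((2:ℝ)^n) • v ∈ Sym3 := sym3_smul _ hv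
    calc M ((2:ℝ) • (((2:ℝ)^n) • v)) ≤ c' * M (((2:ℝ)^n) • v) + hx := hΔ _ hmem
      _ ≤ c' * (c' ^ n * M v + (∑ i ∈ Finset.range n, c' ^ i) * hx) + hx := by
          nlinarith [ih]
      _ = c' ^ (n+1) * M v + (∑ i ∈ Finset.range (n+1), c' ^ i) * hx := by
          rw [geom_sum_succ]; ring

lemma superlinear_bound {M : Mat3 → ℝ} (hnn : ∀ ξ, 0 ≤ M ξ)
    (htop : Tendsto (fun ξ => M ξ / mnorm ξ)
      ((comap mnorm atTop) ⊓ Filter.principal Sym3) atTop) :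
    ∃ R : ℝ, 0 ≤ R ∧ ∀ ξ ∈ Sym3, ‖ξ‖ ≤ R + M ξ := by
  have h : ∀ᶠ ξ in (comap mnorm atTop) ⊓ Filter.principal Sym3, 1 ≤ M ξ / mnorm ξ :=
    htop.eventually (eventually_ge_atTop 1)
  rw [eventually_inf_principal] at h
  rw [eventually_comap] at h
  rw [eventually_atTop] at h
  obtain ⟨b, hb⟩ := h
  refine ⟨max b 1, le_trans zero_le_one (le_max_right _ _), fun ξ hξ => ?_⟩
  rcases le_or_gt (max b 1) (mnorm ξ) with hm | hm
  · have h1 : 1 ≤ M ξ / mnorm ξ := hb (mnorm ξ) (le_trans (le_max_left _ _) hm) ξ rfl hξ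
    have hpos : 0 < mnorm ξ := lt_of_lt_of_le zero_lt_one (le_trans (le_max_right _ _) hm)
    have h2 : mnorm ξ ≤ M ξ := by
      rw [le_div_iff₀ hpos, one_mul] at h1; exact h1
    calc ‖ξ‖ ≤ mnorm ξ := norm_le_mnorm ξ
      _ ≤ M ξ := h2
      _ ≤ max b 1 + M ξ := by
          have := le_max_right b 1; linarith
  · calc ‖ξ‖ ≤ mnorm ξ := norm_le_mnorm ξ
      _ ≤ max b 1 + M ξ := by have := hnn ξ; linarith

def entryCLM (j k : Fin 3) : Mat3 →L[ℝ] ℝ :=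
  LinearMap.toContinuousLinearMap
    { toFun := fun A => A j k
      map_add' := fun A B => rfl
      map_smul' := fun r A => rfl }

lemma entryCLM_apply (j k : Fin 3) (A : Mat3) : entryCLM j k A = A j k := rfl

lemma integral_mem_sym3 {μ : Measure ℝ} {f : ℝ → Mat3} (hfi : Integrable f μ)
    (hs : ∀ s, f s ∈ Sym3) : (∫ s, f s ∂μ) ∈ Sym3 := by
  have hent : ∀ j k, (∫ s, f s ∂μ) j k = ∫ s, f s j k ∂μ := fun j k =>
    ((entryCLM j k).integral_comp_comm hfi).symm
  show Matrix.IsSymm _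
  ext j k
  rw [Matrix.transpose_apply, hent, hent]
  congr 1
  ext s
  exact (hs s).apply j k

lemma key_estimate
    {Mx : Mat3 → ℝ} (hnn : ∀ ξ, 0 ≤ Mx ξ)
    (hconv : ConvexOn ℝ Sym3 Mx) (hcont : ContinuousOn Mx Sym3) (h0 : Mx 0 = 0)
    (hmeasF : ∀ (F : ℝ → Mat3), Measurable F → (∀ s, F s ∈ Sym3) →
      Measurable fun s => Mx (F s))
    (htop : Tendsto (fun ξ => Mx ξ / mnorm ξ)
      ((comap mnorm atTop) ⊓ Filter.principal Sym3) atTop)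
    {c' hx T : ℝ} (hc' : 0 ≤ c') (hhx : 0 ≤ hx) (hT0 : 0 < T) {d : ℕ} (hTd : T ≤ 2 ^ d)
    (hΔ : ∀ ξ ∈ Sym3, Mx ((2:ℝ) • ξ) ≤ c' * Mx ξ + hx)
    {G : ℝ → Mat3} (hG : Measurable G) (hGsym : ∀ s, G s ∈ Sym3)
    (hJ : ∫⁻ s in Ioo (0:ℝ) T, ENNReal.ofReal (Mx (G s)) < ⊤)
    {t : ℝ} (ht : t ∈ Ioo 0 T) :
    Mx (Matrix.of fun j k => ∫ s, (Ioc (0:ℝ) t).indicator (fun s' => G s' j k) s) ≤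
      c' ^ d * (T⁻¹ * (∫⁻ s in Ioo (0:ℝ) T, ENNReal.ofReal (Mx (G s))).toReal)
      + (∑ i ∈ Finset.range d, c' ^ i) * hx := by
  set μT := volume.restrict (Ioo (0:ℝ) T) with hμT
  haveI : IsFiniteMeasure μT := ⟨by
    rw [hμT, Measure.restrict_apply_univ, Real.volume_Ioo]; exact ENNReal.ofReal_lt_top⟩
  haveI : NeZero μT := by
    refine ⟨fun hz => ?_⟩
    have h1 : μT univ = 0 := by rw [hz]; rfl
    rw [hμT, Measure.restrict_apply_univ, Real.volume_Ioo, sub_zero,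
      ENNReal.ofReal_eq_zero] at h1
    linarith
  obtain ⟨R, hR0, hRb⟩ := superlinear_bound hnn htop
  set MG : ℝ → ℝ := fun s => Mx (G s) with hMG
  have hMGmeas : Measurable MG := hmeasF G hG hGsym
  have hMGnn : ∀ s, 0 ≤ MG s := fun s => hnn _
  set J : ENNReal := ∫⁻ s in Ioo (0:ℝ) T, ENNReal.ofReal (Mx (G s)) with hJdef
  have hMGint : Integrable MG μT := by
    refine ⟨hMGmeas.aestronglyMeasurable, ?_⟩
    rw [hasFiniteIntegral_iff_norm]
    have heq : ∀ s, ENNReal.ofReal ‖MG s‖ = ENNReal.ofReal (MG s) := fun s => by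
      rw [Real.norm_eq_abs, abs_of_nonneg (hMGnn s)]
    simp_rw [heq]
    exact hJ
  have hIntReal : ∫ s, MG s ∂μT = J.toReal := by
    rw [integral_eq_lintegral_of_nonneg_ae (Eventually.of_forall hMGnn)
      hMGmeas.aestronglyMeasurable]
  set f : ℝ → Mat3 := fun s => (Ioc (0:ℝ) t).indicator G s with hf
  have hfsym : ∀ s, f s ∈ Sym3 := fun s => by
    by_cases hs : s ∈ Ioc (0:ℝ) t
    · rw [hf]; simp only [Set.indicator_of_mem hs]; exact hGsym s
    · rw [hf]; simp only [Set.indicator_of_notMem hs]; exact sym3_zero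
  have hfmeas : Measurable f := hG.indicator measurableSet_Ioc
  have hMf : ∀ s, Mx (f s) ≤ MG s := fun s => by
    by_cases hs : s ∈ Ioc (0:ℝ) t
    · rw [hf]; simp only [Set.indicator_of_mem hs]; exact le_refl _
    · rw [hf]; simp only [Set.indicator_of_notMem hs, h0]; exact hMGnn s
  have hfint : Integrable f μT := by
    refine Integrable.mono' ((integrable_const R).add hMGint)
      hfmeas.aestronglyMeasurable (Eventually.of_forall fun s => ?_)
    calc ‖f s‖ ≤ R + Mx (f s) := hRb _ (hfsym s)
      _ ≤ R + MG s := by have := hMf s; linarith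
  have hMfint : Integrable (fun s => Mx (f s)) μT := by
    refine Integrable.mono' hMGint ((hmeasF f hfmeas hfsym).aestronglyMeasurable)
      (Eventually.of_forall fun s => ?_)
    rw [Real.norm_eq_abs, abs_of_nonneg (hnn _)]; exact hMf s
  have hjensen := hconv.map_average_le hcont isClosed_sym3
    (Eventually.of_forall hfsym) hfint hMfint
  set A : Mat3 := ⨍ s, f s ∂μT with hA
  have hμTuniv : (μT univ).toReal = T := by
    rw [hμT, Measure.restrict_apply_univ, Real.volume_Ioo, sub_zero,
      ENNReal.toReal_ofReal hT0.le]
  have hHA : (Matrix.of fun j k => ∫ s, (Ioc (0:ℝ) t).indicator (fun s' => G s' j k) s)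
      = ∫ s, f s ∂μT := by
    have hsub : Ioc (0:ℝ) t ⊆ Ioo (0:ℝ) T := fun s hs => ⟨hs.1, lt_of_le_of_lt hs.2 ht.2⟩
    ext j k
    have h1 : (∫ s, f s ∂μT) j k = ∫ s, f s j k ∂μT :=
      ((entryCLM j k).integral_comp_comm hfint).symm
    rw [h1]
    show (∫ s, (Ioc (0:ℝ) t).indicator (fun s' => G s' j k) s) = ∫ s, f s j k ∂μT
    have h2 : ∀ s, f s j k = (Ioc (0:ℝ) t).indicator (fun s' => G s' j k) s := fun s => by
      by_cases hs : s ∈ Ioc (0:ℝ) t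
      · rw [hf]; simp only [Set.indicator_of_mem hs]
      · rw [hf]; simp only [Set.indicator_of_notMem hs, Matrix.zero_apply]
    simp_rw [h2]
    rw [integral_indicator measurableSet_Ioc, integral_indicator measurableSet_Ioc,
      Measure.restrict_restrict measurableSet_Ioc, Set.inter_eq_left.mpr hsub]
  have hAvg : A = T⁻¹ • (∫ s, f s ∂μT) := by rw [hA, average_eq, measureReal_def, hμTuniv]
  have hintSym : (∫ s, f s ∂μT) ∈ Sym3 := integral_mem_sym3 hfint hfsym
  have hAsym : A ∈ Sym3 := by rw [hAvg]; exact sym3_smul _ hintSym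
  have step1 : Mx (∫ s, f s ∂μT) ≤ Mx (((2:ℝ)^d) • A) := by
    have h2d : (0:ℝ) < 2 ^ d := by positivity
    have heq : (T / 2^d) • (((2:ℝ)^d) • A) = ∫ s, f s ∂μT := by
      rw [smul_smul, hAvg, smul_smul]
      congr 1
      field_simp
      simp
    rw [← heq]
    exact scale_le hconv h0 hnn (sym3_smul _ hAsym) (by positivity)
      (by rw [div_le_one h2d]; exact hTd)
  have step2 := delta2_iter hnn hc' hhx hΔ hAsym d
  have step3 : Mx A ≤ T⁻¹ * J.toReal := by
    have havg2 : (⨍ s, Mx (f s) ∂μT) = T⁻¹ * ∫ s, Mx (f s) ∂μT := by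
      rw [average_eq, measureReal_def, hμTuniv, smul_eq_mul]
    have hmono : ∫ s, Mx (f s) ∂μT ≤ ∫ s, MG s ∂μT := integral_mono hMfint hMGint hMf
    calc Mx A ≤ ⨍ s, Mx (f s) ∂μT := hjensen
      _ = T⁻¹ * ∫ s, Mx (f s) ∂μT := havg2
      _ ≤ T⁻¹ * ∫ s, MG s ∂μT :=
          mul_le_mul_of_nonneg_left hmono (by positivity)
      _ = T⁻¹ * J.toReal := by rw [hIntReal]
  calc Mx (Matrix.of fun j k => ∫ s, (Ioc (0:ℝ) t).indicator (fun s' => G s' j k) s)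
      = Mx (∫ s, f s ∂μT) := by rw [hHA]
    _ ≤ Mx (((2:ℝ)^d) • A) := step1
    _ ≤ c' ^ d * Mx A + (∑ i ∈ Finset.range d, c' ^ i) * hx := step2
    _ ≤ c' ^ d * (T⁻¹ * J.toReal) + (∑ i ∈ Finset.range d, c' ^ i) * hx :=
        add_le_add_left (mul_le_mul_of_nonneg_left step3 (pow_nonneg hc' d)) _

end AuxiliaryLemmas

/-- **Time-integral modular estimate**: if `M*` satisfies the `Δ₂`-condition with
constant `c` and function `h`, `T ≤ 2^d`, and `∫_Q M*(x, g) dx dt < ∞`, then there is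
a constant `C(d)` depending only on `d` and `c` with
`∫_Q M*(x, ∫₀ᵗ g(x,s) ds) dx dt ≤ c^d ∫_Q M*(x,g) dx dt + C(d) ∫_Ω h dx`. -/
theorem time_integral_modular_estimate (c : ℝ) (d : ℕ) :
    ∃ C : ℝ, 0 ≤ C ∧
      ∀ (Ω : Set E3), IsOpen Ω → Bornology.IsBounded Ω →
      ∀ T : ℝ, 0 < T → T ≤ 2 ^ d →
      ∀ Mstar : E3 → Mat3 → ℝ, IsNFunction Ω Mstar →
      ∀ h : E3 → ℝ, (∀ x, 0 ≤ h x) → IntegrableOn h Ω →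
      (∀ᵐ x ∂(volume.restrict Ω), ∀ ξ ∈ Sym3,
        Mstar x ((2 : ℝ) • ξ) ≤ c * Mstar x ξ + h x) →
      ∀ g : E3 × ℝ → Mat3, Measurable g → (∀ q, g q ∈ Sym3) →
      (∫⁻ q in Ω ×ˢ Ioo (0:ℝ) T, ENNReal.ofReal (Mstar q.1 (g q)) < ⊤) →
      ∫⁻ q in Ω ×ˢ Ioo (0:ℝ) T,
          ENNReal.ofReal (Mstar q.1
            (Matrix.of fun j k => ∫ s in (0:ℝ)..q.2, g (q.1, s) j k)) ≤
        ENNReal.ofReal (c ^ d) *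
            (∫⁻ q in Ω ×ˢ Ioo (0:ℝ) T, ENNReal.ofReal (Mstar q.1 (g q))) +
          ENNReal.ofReal (C * ∫ x in Ω, h x) := by
  classical
  set c' := max c 0 with hc'def
  have hc'0 : 0 ≤ c' := le_max_right _ _
  set Kd := ∑ i ∈ Finset.range d, c' ^ i with hKd
  have hKd0 : 0 ≤ Kd := Finset.sum_nonneg fun i _ => pow_nonneg hc'0 _
  have h2d : (0:ℝ) < 2 ^ d := by positivity
  refine ⟨2 ^ d * Kd, by positivity, ?_⟩
  intro Ω hΩo hΩb T hT0 hTd Mstar hN h hh0 hhint hΔ g hgmeas hgsym hfin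
  set μΩ := volume.restrict Ω with hμΩ
  set μT := volume.restrict (Ioo (0:ℝ) T) with hμT
  have hsetmeas : MeasurableSet (Ω ×ˢ Ioo (0:ℝ) T) :=
    hΩo.measurableSet.prod measurableSet_Ioo
  have hprod : (volume : Measure (E3 × ℝ)).restrict (Ω ×ˢ Ioo (0:ℝ) T) = μΩ.prod μT := by
    rw [hμΩ, hμT, Measure.prod_restrict, ← Measure.volume_eq_prod]
  have hφmeas : Measurable fun q : E3 × ℝ => Mstar q.1 (g q) :=
    meas_comp_caratheodory hN.meas hN.cont hgmeas hgsym measurable_fst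
  set J : E3 → ENNReal :=
    fun x => ∫⁻ t in Ioo (0:ℝ) T, ENNReal.ofReal (Mstar x (g (x, t))) with hJdef
  have hJmeas : Measurable J := by
    have := (ENNReal.measurable_ofReal.comp hφmeas).lintegral_prod_right'
      (ν := volume.restrict (Ioo (0:ℝ) T))
    exact this
  have hIeq : (∫⁻ q in Ω ×ˢ Ioo (0:ℝ) T, ENNReal.ofReal (Mstar q.1 (g q)))
      = ∫⁻ x, J x ∂μΩ := by
    rw [hprod]
    exact lintegral_prod _ (ENNReal.measurable_ofReal.comp hφmeas).aemeasurable
  have hJfin : ∀ᵐ x ∂μΩ, J x < ⊤ := by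
    refine ae_lt_top' hJmeas.aemeasurable ?_
    rw [← hIeq]; exact hfin.ne
  -- the (everywhere-defined) indicator version of the time integral
  set H' : E3 × ℝ → Mat3 := fun q =>
    Matrix.of fun j k => ∫ s, (Ioc (0:ℝ) q.2).indicator (fun s' => g (q.1, s') j k) s
    with hH'def
  have hentry : ∀ j k : Fin 3, Measurable fun A : Mat3 => A j k := fun j k =>
    (measurable_pi_apply k).comp (measurable_pi_apply j)
  have hH'meas : Measurable H' := by
    refine measurable_pi_lambda _ fun j => measurable_pi_lambda _ fun k => ?_
    have hFmeas : Measurable fun p : (E3 × ℝ) × ℝ =>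
        (Ioc (0:ℝ) p.1.2).indicator (fun s' => g (p.1.1, s') j k) p.2 := by
      have heq : (fun p : (E3 × ℝ) × ℝ =>
          (Ioc (0:ℝ) p.1.2).indicator (fun s' => g (p.1.1, s') j k) p.2)
          = fun p : (E3 × ℝ) × ℝ =>
            if p ∈ {p : (E3 × ℝ) × ℝ | 0 < p.2 ∧ p.2 ≤ p.1.2}
            then g (p.1.1, p.2) j k else 0 := by
        funext p
        by_cases hp : p.2 ∈ Ioc (0:ℝ) p.1.2
        · rw [Set.indicator_of_mem hp,
            if_pos (show p ∈ {p : (E3 × ℝ) × ℝ | 0 < p.2 ∧ p.2 ≤ p.1.2} from hp)]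
        · rw [Set.indicator_of_notMem hp,
            if_neg (show p ∉ {p : (E3 × ℝ) × ℝ | 0 < p.2 ∧ p.2 ≤ p.1.2} from hp)]
      rw [heq]
      have hset : MeasurableSet {p : (E3 × ℝ) × ℝ | 0 < p.2 ∧ p.2 ≤ p.1.2} := by
        refine MeasurableSet.inter ?_ ?_
        · exact measurableSet_lt measurable_const measurable_snd
        · exact measurableSet_le measurable_snd (measurable_fst.snd)
      exact Measurable.ite hset
        ((hentry j k).comp (hgmeas.comp ((measurable_fst.fst).prodMk measurable_snd)))
        measurable_const
    exact (hFmeas.stronglyMeasurable.integral_prod_right').measurable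
  have hH'sym : ∀ q, H' q ∈ Sym3 := by
    intro q
    show Matrix.IsSymm _
    ext j k
    rw [Matrix.transpose_apply]
    show (∫ s, (Ioc (0:ℝ) q.2).indicator (fun s' => g (q.1, s') k j) s)
      = ∫ s, (Ioc (0:ℝ) q.2).indicator (fun s' => g (q.1, s') j k) s
    congr 1
    funext s
    by_cases hs : s ∈ Ioc (0:ℝ) q.2
    · rw [Set.indicator_of_mem hs, Set.indicator_of_mem hs]
      exact (hgsym (q.1, s)).apply j k
    · rw [Set.indicator_of_notMem hs, Set.indicator_of_notMem hs]
  have hΨmeas : Measurable fun q : E3 × ℝ => Mstar q.1 (H' q) :=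
    meas_comp_caratheodory hN.meas hN.cont hH'meas hH'sym measurable_fst
  have hLHS : (∫⁻ q in Ω ×ˢ Ioo (0:ℝ) T, ENNReal.ofReal (Mstar q.1
        (Matrix.of fun j k => ∫ s in (0:ℝ)..q.2, g (q.1, s) j k)))
      = ∫⁻ q, ENNReal.ofReal (Mstar q.1 (H' q)) ∂(μΩ.prod μT) := by
    rw [← hprod]
    refine lintegral_congr_ae ?_
    filter_upwards [ae_restrict_mem hsetmeas] with q hq
    have hq2 : (0:ℝ) ≤ q.2 := hq.2.1.le
    have hmat : (Matrix.of fun j k => ∫ s in (0:ℝ)..q.2, g (q.1, s) j k) = H' q := by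
      ext j k
      show (∫ s in (0:ℝ)..q.2, g (q.1, s) j k)
        = ∫ s, (Ioc (0:ℝ) q.2).indicator (fun s' => g (q.1, s') j k) s
      rw [intervalIntegral.integral_of_le hq2, ← integral_indicator measurableSet_Ioc]
    rw [hmat]
  have claim : ∀ᵐ x ∂μΩ, (∫⁻ t, ENNReal.ofReal (Mstar x (H' (x, t))) ∂μT) ≤
      ENNReal.ofReal (c' ^ d) * J x + ENNReal.ofReal (2 ^ d * Kd * h x) := by
    filter_upwards [hJfin, hΔ, ae_restrict_mem hΩo.measurableSet] with x hJx hΔx hxΩ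
    have hnnx : ∀ ξ, 0 ≤ Mstar x ξ := hN.nonneg x
    have h0x : Mstar x 0 = 0 := (hN.zero_iff x hxΩ 0 sym3_zero).mpr rfl
    have hΔ'x : ∀ ξ ∈ Sym3, Mstar x ((2:ℝ) • ξ) ≤ c' * Mstar x ξ + h x := fun ξ hξ =>
      le_trans (hΔx ξ hξ)
        (add_le_add_left (mul_le_mul_of_nonneg_right (le_max_left _ _) (hnnx ξ)) _)
    have hmeasF : ∀ (F : ℝ → Mat3), Measurable F → (∀ s, F s ∈ Sym3) →
        Measurable fun s => Mstar x (F s) := fun F hF hFs =>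
      meas_comp_caratheodory hN.meas hN.cont hF hFs measurable_const
    have hGmeas : Measurable fun s : ℝ => g (x, s) :=
      hgmeas.comp (measurable_const.prodMk measurable_id)
    have hJx' : (∫⁻ s in Ioo (0:ℝ) T, ENNReal.ofReal (Mstar x (g (x, s)))) < ⊤ := hJx
    have hptwise : ∀ t ∈ Ioo (0:ℝ) T, ENNReal.ofReal (Mstar x (H' (x, t))) ≤
        ENNReal.ofReal (c' ^ d * (T⁻¹ * (J x).toReal) + Kd * h x) := fun t ht =>
      ENNReal.ofReal_le_ofReal
        (key_estimate hnnx (hN.convexOn x) (hN.cont x) h0x hmeasF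
          (hN.tendsto_top x hxΩ) hc'0 (hh0 x) hT0 hTd hΔ'x hGmeas
          (fun s => hgsym _) hJx' ht)
    have hnn1 : 0 ≤ c' ^ d * (T⁻¹ * (J x).toReal) :=
      mul_nonneg (pow_nonneg hc'0 d)
        (mul_nonneg (inv_nonneg.mpr hT0.le) ENNReal.toReal_nonneg)
    calc (∫⁻ t, ENNReal.ofReal (Mstar x (H' (x, t))) ∂μT)
        ≤ ∫⁻ _t, ENNReal.ofReal (c' ^ d * (T⁻¹ * (J x).toReal) + Kd * h x) ∂μT := by
          refine lintegral_mono_ae ?_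
          rw [hμT, ae_restrict_iff' measurableSet_Ioo]
          exact Eventually.of_forall fun t ht => hptwise t ht
      _ = ENNReal.ofReal (c' ^ d * (T⁻¹ * (J x).toReal) + Kd * h x)
            * ENNReal.ofReal T := by
          rw [lintegral_const, hμT, Measure.restrict_apply_univ, Real.volume_Ioo, sub_zero]
      _ ≤ (ENNReal.ofReal (c' ^ d * (T⁻¹ * (J x).toReal)) + ENNReal.ofReal (Kd * h x))
            * ENNReal.ofReal T := mul_le_mul_left ENNReal.ofReal_add_le _
      _ = ENNReal.ofReal (c' ^ d * (T⁻¹ * (J x).toReal)) * ENNReal.ofReal T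
            + ENNReal.ofReal (Kd * h x) * ENNReal.ofReal T := add_mul _ _ _
      _ ≤ ENNReal.ofReal (c' ^ d) * J x + ENNReal.ofReal (2 ^ d * Kd * h x) := by
          have e1 : ENNReal.ofReal (c' ^ d * (T⁻¹ * (J x).toReal)) * ENNReal.ofReal T
              = ENNReal.ofReal (c' ^ d) * J x := by
            rw [← ENNReal.ofReal_mul hnn1]
            have heq : c' ^ d * (T⁻¹ * (J x).toReal) * T = c' ^ d * (J x).toReal := by
              field_simp
            rw [heq, ENNReal.ofReal_mul (pow_nonneg hc'0 d),
              ENNReal.ofReal_toReal hJx.ne]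
          have e2 : ENNReal.ofReal (Kd * h x) * ENNReal.ofReal T
              ≤ ENNReal.ofReal (2 ^ d * Kd * h x) := by
            rw [← ENNReal.ofReal_mul (mul_nonneg hKd0 (hh0 x))]
            apply ENNReal.ofReal_le_ofReal
            have h1 := mul_le_mul_of_nonneg_left hTd (mul_nonneg hKd0 (hh0 x))
            nlinarith [h1]
          rw [e1]
          exact add_le_add_right e2 _
  rw [hLHS, lintegral_prod (fun q => ENNReal.ofReal (Mstar q.1 (H' q))) hΨmeas.ennreal_ofReal.aemeasurable]
  have hc'd : ENNReal.ofReal (c' ^ d) ≤ ENNReal.ofReal (c ^ d) := by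
    rcases le_or_gt 0 c with hc | hc
    · rw [hc'def, max_eq_left hc]
    · rcases Nat.eq_zero_or_pos d with hd | hd
      · subst hd; simp
      · have hz : c' = 0 := max_eq_right hc.le
        rw [hz, zero_pow hd.ne', ENNReal.ofReal_zero]
        exact zero_le
  have hhint' : Integrable (fun x => 2 ^ d * Kd * h x) μΩ := hhint.const_mul _
  calc (∫⁻ x, ∫⁻ t, ENNReal.ofReal (Mstar (x, t).1 (H' (x, t))) ∂μT ∂μΩ)
      ≤ ∫⁻ x, (ENNReal.ofReal (c' ^ d) * J x + ENNReal.ofReal (2 ^ d * Kd * h x)) ∂μΩ :=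
        lintegral_mono_ae claim
    _ = ENNReal.ofReal (c' ^ d) * (∫⁻ x, J x ∂μΩ)
          + ∫⁻ x, ENNReal.ofReal (2 ^ d * Kd * h x) ∂μΩ := by
        rw [lintegral_add_left (hJmeas.const_mul _), lintegral_const_mul _ hJmeas]
    _ ≤ ENNReal.ofReal (c ^ d) * (∫⁻ q in Ω ×ˢ Ioo (0:ℝ) T, ENNReal.ofReal (Mstar q.1 (g q)))
          + ENNReal.ofReal (2 ^ d * Kd * ∫ x in Ω, h x) := by
        have hh' : (∫⁻ x, ENNReal.ofReal (2 ^ d * Kd * h x) ∂μΩ)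
            = ENNReal.ofReal (2 ^ d * Kd * ∫ x in Ω, h x) := by
          rw [← ofReal_integral_eq_lintegral_ofReal hhint'
            (Eventually.of_forall fun x => mul_nonneg (mul_nonneg h2d.le hKd0) (hh0 x))]
          rw [integral_const_mul]
        rw [hh', hIeq]
        exact add_le_add (mul_le_mul_left hc'd _) le_rfl
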